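/- arXiv:2405.17516 — 4 statements merged into one kernel-verified Lean document; each statement's English description precedes it below -/
import Mathlib

section
/- Proposition 3 (KDTW is positive definite): Let k be a positive definite kernel on a set X, let m be a positive integer, let U be a set, and let C be a finite index set such that to each π ∈ C are associated two maps φ_{π,1}, φ_{π,2} : U → (Fin m → X). Then the kernel KDTW(x, y) = ∑_{π ∈ C} ∑_{f ∈ {φ_{π,1}, φ_{π,2}}} ∑_{g ∈ {φ_{π,1}, φ_{π,2}}} ∏_{l=0}^{m−1} k( (f x)(l), (g y)(l) ) is a positive definite kernel on U. -/
/-- A kernel `K : X → X → ℝ` is positive definite if it is symmetric and for every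
finite family of points `x₁,…,x_N` and real coefficients `c₁,…,c_N`,
`∑_{i,j} c_i c_j K(x_i, x_j) ≥ 0`. -/
def IsPDKernel {X : Type*} (K : X → X → ℝ) : Prop :=
  (∀ x y : X, K x y = K y x) ∧
  ∀ (N : ℕ) (x : Fin N → X) (c : Fin N → ℝ),
    0 ≤ ∑ i : Fin N, ∑ j : Fin N, c i * c j * K (x i) (x j)


lemma IsPDKernel.quad_nonneg {X : Type*} {k : X → X → ℝ} (hk : IsPDKernel k)
    {ι : Type*} [Fintype ι] (x : ι → X) (c : ι → ℝ) :
    0 ≤ ∑ i : ι, ∑ j : ι, c i * c j * k (x i) (x j) := by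
  have e := (Fintype.equivFin ι).symm
  have h := hk.2 (Fintype.card ι) (x ∘ e) (c ∘ e)
  calc (0:ℝ) ≤ ∑ i : Fin (Fintype.card ι), ∑ j : Fin (Fintype.card ι),
      (c ∘ e) i * (c ∘ e) j * k ((x ∘ e) i) ((x ∘ e) j) := h
    _ = ∑ i : ι, ∑ j : ι, c i * c j * k (x i) (x j) := by
      refine Fintype.sum_equiv e _ _ fun i => ?_
      exact Fintype.sum_equiv e _ _ fun j => rfl

lemma IsPDKernel.pullback {X U : Type*} {k : X → X → ℝ} (hk : IsPDKernel k)
    (F : U → X) : IsPDKernel (fun u v => k (F u) (F v)) :=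
  ⟨fun u v => hk.1 _ _, fun N x c => hk.2 N (F ∘ x) c⟩

lemma isPDKernel_one {X : Type*} : IsPDKernel (fun _ _ : X => (1:ℝ)) := by
  refine ⟨fun _ _ => rfl, fun N x c => ?_⟩
  have : ∑ i : Fin N, ∑ j : Fin N, c i * c j * 1 = (∑ i : Fin N, c i) ^ 2 := by
    rw [sq, Finset.sum_mul_sum]
    simp [mul_one]
  rw [this]
  positivity

lemma IsPDKernel.mul {X : Type*} {k₁ k₂ : X → X → ℝ} (h₁ : IsPDKernel k₁)
    (h₂ : IsPDKernel k₂) : IsPDKernel (fun x y => k₁ x y * k₂ x y) := by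
  refine ⟨fun x y => by simp only [h₁.1 x y, h₂.1 x y], fun N x c => ?_⟩
  dsimp only
  set M : Matrix (Fin N) (Fin N) ℝ := Matrix.of fun i j => k₁ (x i) (x j) with hM
  have hPSD : M.PosSemidef := by
    refine Matrix.PosSemidef.of_dotProduct_mulVec_nonneg ?_ ?_
    · ext i j
      simp [M, Matrix.conjTranspose_apply, h₁.1 (x j) (x i)]
    · intro v
      have := h₁.quad_nonneg x v
      calc (0:ℝ) ≤ ∑ i, ∑ j, v i * v j * k₁ (x i) (x j) := this
        _ = dotProduct (star v) (M.mulVec v) := by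
          simp only [dotProduct, Matrix.mulVec, star, Finset.mul_sum, M]
          refine Finset.sum_congr rfl fun i _ => Finset.sum_congr rfl fun j _ => by
            simp [dotProduct]; ring
  obtain ⟨B, hB⟩ : ∃ B : Matrix (Fin N) (Fin N) ℝ, M = B.conjTranspose * B := by
    open scoped MatrixOrder in exact CStarAlgebra.nonneg_iff_eq_star_mul_self.mp hPSD.nonneg
  have hMe : ∀ i j, k₁ (x i) (x j) = ∑ r : Fin N, B r i * B r j := by
    intro i j
    have : M i j = (B.conjTranspose * B) i j := by rw [hB]
    simpa [Matrix.mul_apply, M] using this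
  calc (0:ℝ) ≤ ∑ r : Fin N, ∑ i, ∑ j,
        (c i * B r i) * (c j * B r j) * k₂ (x i) (x j) :=
      Finset.sum_nonneg fun r _ => h₂.quad_nonneg x (fun i => c i * B r i)
    _ = ∑ i, ∑ j, c i * c j * (k₁ (x i) (x j) * k₂ (x i) (x j)) := by
      rw [Finset.sum_comm]
      refine Finset.sum_congr rfl fun i _ => ?_
      rw [Finset.sum_comm]
      refine Finset.sum_congr rfl fun j _ => ?_
      rw [hMe i j, Finset.sum_mul, Finset.mul_sum]
      exact Finset.sum_congr rfl fun r _ => by ring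

lemma IsPDKernel.finsetSum {X ι : Type*} {K : ι → X → X → ℝ} (s : Finset ι)
    (h : ∀ π ∈ s, IsPDKernel (K π)) :
    IsPDKernel (fun x y => ∑ π ∈ s, K π x y) := by
  refine ⟨fun x y => Finset.sum_congr rfl fun π hπ => (h π hπ).1 x y, fun N x c => ?_⟩
  dsimp only
  have : ∑ i : Fin N, ∑ j : Fin N, c i * c j * ∑ π ∈ s, K π (x i) (x j)
      = ∑ π ∈ s, ∑ i : Fin N, ∑ j : Fin N, c i * c j * K π (x i) (x j) :=
    calc ∑ i : Fin N, ∑ j : Fin N, c i * c j * ∑ π ∈ s, K π (x i) (x j)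
        = ∑ i : Fin N, ∑ π ∈ s, ∑ j : Fin N, c i * c j * K π (x i) (x j) := by
          refine Finset.sum_congr rfl fun i _ => ?_
          rw [← Finset.sum_comm]
          exact Finset.sum_congr rfl fun j _ => Finset.mul_sum _ _ _
      _ = ∑ π ∈ s, ∑ i : Fin N, ∑ j : Fin N, c i * c j * K π (x i) (x j) :=
          Finset.sum_comm
  rw [this]
  exact Finset.sum_nonneg fun π hπ => (h π hπ).2 N x c

lemma isPDKernel_prod {X ι : Type*} {k : X → X → ℝ} (hk : IsPDKernel k)
    (s : Finset ι) :
    IsPDKernel (fun a b : ι → X => ∏ l ∈ s, k (a l) (b l)) := by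
  classical
  induction s using Finset.cons_induction with
  | empty => simpa using (isPDKernel_one (X := ι → X))
  | cons l₀ s hl ih =>
      have := (hk.pullback (fun a : ι → X => a l₀)).mul ih
      simpa [Finset.prod_insert hl] using this

/-- Proposition 3 (KDTW is positive definite): if `k` is a positive definite kernel on
`X`, `m > 0`, and to each element `π` of a finite index set `C` are associated two maps
`φ π 0, φ π 1 : U → (Fin m → X)`, then
`KDTW(x,y) = ∑_{π ∈ C} ∑_{f,g ∈ {φ π 0, φ π 1}} ∏_{l} k((f x)(l), (g y)(l))`
is a positive definite kernel on `U`. -/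
theorem isPDKernel_kdtw {X U : Type*} (k : X → X → ℝ) (hk : IsPDKernel k)
    (m : ℕ) (hm : 0 < m) {C : Type*} [Fintype C]
    (φ : C → Fin 2 → U → (Fin m → X)) :
    IsPDKernel (fun x y : U =>
      ∑ π : C, ∑ f : Fin 2, ∑ g : Fin 2,
        ∏ l : Fin m, k (φ π f x l) (φ π g y l)) := by
  classical
  set T : (Fin m → X) → (Fin m → X) → ℝ := fun a b => ∏ l : Fin m, k (a l) (b l) with hTdef
  have hT : IsPDKernel T := isPDKernel_prod hk Finset.univ
  have key : ∀ π : C, IsPDKernel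
      (fun x y : U => ∑ f : Fin 2, ∑ g : Fin 2, T (φ π f x) (φ π g y)) := by
    intro π
    constructor
    · intro x y
      dsimp only
      rw [Finset.sum_comm]
      exact Finset.sum_congr rfl fun f _ => Finset.sum_congr rfl fun g _ => hT.1 _ _
    · intro N x c
      dsimp only
      have h := hT.quad_nonneg (ι := Fin N × Fin 2)
        (fun p => φ π p.2 (x p.1)) (fun p => c p.1)
      calc (0:ℝ) ≤ ∑ p : Fin N × Fin 2, ∑ q : Fin N × Fin 2,
            c p.1 * c q.1 * T (φ π p.2 (x p.1)) (φ π q.2 (x q.1)) := h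
        _ = ∑ i : Fin N, ∑ j : Fin N, c i * c j *
              ∑ f : Fin 2, ∑ g : Fin 2, T (φ π f (x i)) (φ π g (x j)) := by
          simp_rw [Fintype.sum_prod_type, Finset.mul_sum]
          exact Finset.sum_congr rfl fun i _ => Finset.sum_comm
  have := IsPDKernel.finsetSum
    (K := fun π (x y : U) => ∑ f : Fin 2, ∑ g : Fin 2, T (φ π f x) (φ π g y))
    Finset.univ (fun π _ => key π)
  exact this
end

section
/- Forward–backward factorization: let w : ℕ × ℕ → ℝ be a weight function on grid cells, fix n, m and a cell (i,j) with i ≤ n and j ≤ m, and define F(i,j) = ∑_π ∏_{l} w(π(l)) over all alignment paths π from (0,0) to (i,j), B(i,j) = ∑_σ ∏_{l} w(σ(l)) over all alignment paths σ from (i,j) to (n,m), and S(i,j) = ∑_ρ ∏_{l} w(ρ(l)) over all alignment paths ρ from (0,0) to (n,m) that visit the cell (i,j). Then F(i,j) · B(i,j) = w(i,j) · S(i,j). -/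
/-- `IsAlignPath a b π` : the list of grid cells `π` is an alignment path from `a` to
`b`, i.e. it is nonempty, starts at `a`, ends at `b`, and each increment between
consecutive cells belongs to `{(1,0), (0,1), (1,1)}`. -/
def IsAlignPath (a b : ℕ × ℕ) (π : List (ℕ × ℕ)) : Prop :=
  π.head? = some a ∧ π.getLast? = some b ∧
  π.Chain' (fun u v : ℕ × ℕ => v = u + (1, 0) ∨ v = u + (0, 1) ∨ v = u + (1, 1))

namespace AlignAux

abbrev Step (u v : ℕ × ℕ) : Prop := v = u + (1, 0) ∨ v = u + (0, 1) ∨ v = u + (1, 1)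

lemma step_lt {u v : ℕ × ℕ} (h : Step u v) : u.1 + u.2 < v.1 + v.2 := by
  rcases h with h | h | h <;> subst h <;> simp [Prod.fst_add, Prod.snd_add] <;> omega

lemma step_le {u v : ℕ × ℕ} (h : Step u v) : u ≤ v := by
  rcases h with h | h | h <;> subst h <;>
    exact ⟨by simp [Prod.fst_add], by simp [Prod.snd_add]⟩

lemma path_ne_nil {a b π} (h : IsAlignPath a b π) : π ≠ [] := by
  intro hn; rw [hn] at h; simp [IsAlignPath] at h

lemma cons_decomp {a b π} (h : IsAlignPath a b π) : π = a :: π.tail := by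
  cases π with
  | nil => exact absurd rfl (path_ne_nil h)
  | cons x t => obtain ⟨h1, _⟩ := h; simp at h1; subst h1; rfl

lemma pairwise_lt {a b π} (h : IsAlignPath a b π) :
    π.Pairwise (fun u v : ℕ × ℕ => u.1 + u.2 < v.1 + v.2) := by
  haveI : IsTrans (ℕ × ℕ) (fun u v : ℕ × ℕ => u.1 + u.2 < v.1 + v.2) :=
    ⟨fun _ _ _ h1 h2 => h1.trans h2⟩
  exact List.isChain_iff_pairwise.mp (h.2.2.imp fun _ _ h => step_lt h)

lemma not_mem_dropLast {a b π} (h : IsAlignPath a b π) : b ∉ π.dropLast := by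
  intro hb
  have hne := path_ne_nil h
  have hlast : π.getLast hne = b := by
    have h2 := h.2.1
    rw [List.getLast?_eq_getLast hne] at h2
    exact Option.some_inj.mp h2
  have hdec : π.dropLast ++ [b] = π := by
    rw [← hlast]; exact List.dropLast_append_getLast hne
  have hp := pairwise_lt h
  rw [← hdec, List.pairwise_append] at hp
  have := hp.2.2 b hb b (by simp)
  omega

lemma not_mem_tail {a b π} (h : IsAlignPath a b π) : a ∉ π.tail := by
  intro ha
  have hp := pairwise_lt h
  rw [cons_decomp h, List.pairwise_cons] at hp
  have := hp.1 a ha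
  omega

lemma mem_le_last {a b π} (h : IsAlignPath a b π) : ∀ x ∈ π, x ≤ b := by
  intro x hx
  haveI : IsTrans (ℕ × ℕ) (· ≤ ·) := ⟨fun _ _ _ h1 h2 => h1.trans h2⟩
  have hp : π.Pairwise (· ≤ ·) :=
    List.isChain_iff_pairwise.mp (h.2.2.imp fun _ _ h => step_le h)
  have hne := path_ne_nil h
  have hlast : π.getLast hne = b := by
    have h2 := h.2.1
    rw [List.getLast?_eq_getLast hne] at h2
    exact Option.some_inj.mp h2
  have hdec : π.dropLast ++ [b] = π := by
    rw [← hlast]; exact List.dropLast_append_getLast hne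
  rw [← hdec] at hx hp
  rw [List.pairwise_append] at hp
  rcases List.mem_append.mp hx with hx | hx
  · exact hp.2.2 x hx b (by simp)
  · simp at hx; exact hx.le

lemma length_le {a b π} (h : IsAlignPath a b π) : π.length ≤ b.1 + b.2 + 1 := by
  classical
  have hp : (π.map fun x : ℕ × ℕ => x.1 + x.2).Pairwise (· < ·) := by
    rw [List.pairwise_map]; exact pairwise_lt h
  have hnd : (π.map fun x : ℕ × ℕ => x.1 + x.2).Nodup := hp.imp fun h => ne_of_lt h
  have hsub : (π.map fun x : ℕ × ℕ => x.1 + x.2).toFinset ⊆ Finset.range (b.1 + b.2 + 1) := by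
    intro k hk
    simp only [List.mem_toFinset, List.mem_map] at hk
    obtain ⟨x, hx, rfl⟩ := hk
    have := mem_le_last h x hx
    simp only [Finset.mem_range]
    have h1 := this.1; have h2 := this.2; omega
  have := Finset.card_le_card hsub
  rw [List.toFinset_card_of_nodup hnd, Finset.card_range] at this
  simpa using this

lemma finite_paths (a b : ℕ × ℕ) : {π : List (ℕ × ℕ) | IsAlignPath a b π}.Finite := by
  haveI : Finite (Set.Iic b) := (Set.finite_Iic b).to_subtype
  apply Set.Finite.subset
    (((List.finite_length_le (Set.Iic b) (b.1 + b.2 + 1))).image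
      (fun l : List (Set.Iic b) => l.map Subtype.val))
  intro π hπ
  refine ⟨π.attach.map fun x => ⟨x.1, mem_le_last hπ x.1 x.2⟩, ?_, ?_⟩
  · simpa using length_le hπ
  · simp [Function.comp_def, List.attach_map_subtype_val]

lemma append_path {a c d : ℕ × ℕ} {π σ : List (ℕ × ℕ)}
    (hπ : IsAlignPath a c π) (hσ : IsAlignPath c d σ) :
    IsAlignPath a d (π ++ σ.tail) := by
  obtain ⟨hπh, hπl, hπc⟩ := hπ
  have hσd := cons_decomp hσ
  obtain ⟨hσh, hσl, hσc⟩ := hσ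
  have hπne : π ≠ [] := by intro hn; rw [hn] at hπh; simp at hπh
  refine ⟨?_, ?_, ?_⟩
  · rw [List.head?_append_of_ne_nil _ hπne]; exact hπh  -- check name
  · cases ht : σ.tail with
    | nil =>
      have : σ = [c] := by rw [hσd, ht]
      rw [this] at hσl; simp at hσl
      simp [ht, hπl, hσl]
    | cons y t' =>
      rw [List.getLast?_append_of_ne_nil _ (by simp [ht])]
      have hσl' : (c :: (y :: t')).getLast? = some d := by rw [← ht, ← hσd]; exact hσl
      rw [List.getLast?_cons_cons] at hσl'
      exact hσl'
  · unfold List.Chain'; rw [List.isChain_append]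
    refine ⟨hπc, ?_, ?_⟩
    · rw [hσd] at hσc; exact List.IsChain.tail (l := c :: σ.tail) hσc
    · intro x hx y hy
      rw [hπl] at hx; simp at hx; subst hx
      rw [hσd] at hσc; unfold List.Chain' at hσc; rw [List.isChain_cons] at hσc
      exact hσc.1 y hy

end AlignAux

namespace AlignAux

lemma last_mem {a b : ℕ × ℕ} {π : List (ℕ × ℕ)} (h : IsAlignPath a b π) : b ∈ π := by
  have hne := path_ne_nil h
  have h2 := h.2.1
  rw [List.getLast?_eq_getLast hne] at h2
  rw [← Option.some_inj.mp h2]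
  exact List.getLast_mem hne

def idx (c : ℕ × ℕ) (ρ : List (ℕ × ℕ)) : ℕ := @List.idxOf _ instBEqOfDecidableEq c ρ

lemma split_path {a d c : ℕ × ℕ} {ρ : List (ℕ × ℕ)} (h : IsAlignPath a d ρ) (hc : c ∈ ρ) :
    IsAlignPath a c (ρ.take (idx c ρ + 1)) ∧ IsAlignPath c d (ρ.drop (idx c ρ)) := by
  unfold idx
  set k := @List.idxOf _ instBEqOfDecidableEq c ρ with hk0
  have hk : k < ρ.length := (@List.idxOf_lt_length_iff _ instBEqOfDecidableEq _ _ _).mpr hc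
  have hget : ρ[k] = c := @List.getElem_idxOf _ instBEqOfDecidableEq _ _ _ hk
  constructor
  · refine ⟨?_, ?_, h.2.2.take _⟩
    · cases ρ with
      | nil => simp at hc
      | cons x t => simpa using h.1
    · rw [List.getLast?_eq_getElem?]
      have hlen : (ρ.take (k + 1)).length = k + 1 := by
        rw [List.length_take]; omega
      rw [hlen]
      simp only [Nat.add_sub_cancel, List.getElem?_take]
      rw [if_pos (Nat.lt_succ_self _), List.getElem?_eq_getElem hk, hget]
  · refine ⟨?_, ?_, h.2.2.drop _⟩
    · rw [List.head?_drop, List.getElem?_eq_getElem hk, hget]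
    · have hne : ρ.drop k ≠ [] := by
        intro hn
        have := congrArg List.length hn
        simp at this; omega
      have h2 : (ρ.take k ++ ρ.drop k).getLast? = some d := by
        rw [List.take_append_drop]; exact h.2.1
      rwa [List.getLast?_append_of_ne_nil _ hne] at h2

lemma recover {a c d : ℕ × ℕ} {π σ : List (ℕ × ℕ)}
    (hπ : IsAlignPath a c π) (hσ : IsAlignPath c d σ) :
    (π ++ σ.tail).take (idx c (π ++ σ.tail) + 1) = π ∧
    (π ++ σ.tail).drop (idx c (π ++ σ.tail)) = σ := by
  classical
  have hne := path_ne_nil hπ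
  have hlast : π.getLast hne = c := by
    have h2 := hπ.2.1
    rw [List.getLast?_eq_getLast hne] at h2
    exact Option.some_inj.mp h2
  have hdec : π.dropLast ++ [c] = π := by
    rw [← hlast]; exact List.dropLast_append_getLast hne
  have hρ : π ++ σ.tail = π.dropLast ++ (c :: σ.tail) := by
    rw [← hdec]; simp
  have hidx : idx c (π ++ σ.tail) = π.dropLast.length := by
    unfold idx
    letI : BEq (ℕ × ℕ) := instBEqOfDecidableEq
    rw [hρ, List.idxOf_append_of_notMem (not_mem_dropLast hπ)]
    simp
  have hlen : π.dropLast.length + 1 = π.length := by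
    have := congrArg List.length hdec
    simpa using this
  constructor
  · rw [hidx, hlen]; exact List.take_left (l₁ := π) (l₂ := σ.tail)
  · rw [hidx, hρ, List.drop_left, ← cons_decomp hσ]

end AlignAux


open AlignAux

/-- Forward–backward factorization: with `w : ℕ × ℕ → ℝ` a weight function on grid
cells and a cell `(i,j)` with `i ≤ n`, `j ≤ m`, letting
`F(i,j) = ∑_π ∏_l w(π(l))` over alignment paths from `(0,0)` to `(i,j)`,
`B(i,j) = ∑_σ ∏_l w(σ(l))` over alignment paths from `(i,j)` to `(n,m)`, and
`S(i,j) = ∑_ρ ∏_l w(ρ(l))` over alignment paths from `(0,0)` to `(n,m)` that visit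
`(i,j)`, one has `F(i,j) · B(i,j) = w(i,j) · S(i,j)`. -/
theorem forward_backward_factorization (w : ℕ × ℕ → ℝ) (n m i j : ℕ)
    (hi : i ≤ n) (hj : j ≤ m) :
    (∑ᶠ π ∈ {π : List (ℕ × ℕ) | IsAlignPath (0, 0) (i, j) π}, (π.map w).prod) *
      (∑ᶠ σ ∈ {σ : List (ℕ × ℕ) | IsAlignPath (i, j) (n, m) σ}, (σ.map w).prod) =
    w (i, j) *
      ∑ᶠ ρ ∈ {ρ : List (ℕ × ℕ) | IsAlignPath (0, 0) (n, m) ρ ∧ (i, j) ∈ ρ},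
        (ρ.map w).prod := by
  classical
  have hA := finite_paths (0, 0) (i, j)
  have hB := finite_paths (i, j) (n, m)
  have hC : {ρ : List (ℕ × ℕ) | IsAlignPath (0, 0) (n, m) ρ ∧ (i, j) ∈ ρ}.Finite :=
    (finite_paths (0, 0) (n, m)).subset fun ρ h => h.1
  rw [finsum_mem_eq_finite_toFinset_sum _ hA, finsum_mem_eq_finite_toFinset_sum _ hB,
      finsum_mem_eq_finite_toFinset_sum _ hC, Finset.sum_mul_sum, Finset.mul_sum,
      ← Finset.sum_product']
  refine Finset.sum_nbij' (fun p => p.1 ++ p.2.tail)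
    (fun ρ => (ρ.take (idx (i, j) ρ + 1), ρ.drop (idx (i, j) ρ))) ?_ ?_ ?_ ?_ ?_
  · rintro ⟨π, σ⟩ hp
    rw [Finset.mem_product, Set.Finite.mem_toFinset, Set.Finite.mem_toFinset] at hp
    rw [Set.Finite.mem_toFinset]
    exact ⟨append_path hp.1 hp.2, List.mem_append.mpr (Or.inl (last_mem hp.1))⟩
  · intro ρ hρ
    rw [Set.Finite.mem_toFinset] at hρ
    rw [Finset.mem_product, Set.Finite.mem_toFinset, Set.Finite.mem_toFinset]
    exact split_path hρ.1 hρ.2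
  · rintro ⟨π, σ⟩ hp
    rw [Finset.mem_product, Set.Finite.mem_toFinset, Set.Finite.mem_toFinset] at hp
    have := recover hp.1 hp.2
    simp only [Prod.mk.injEq]
    exact ⟨this.1, this.2⟩
  · intro ρ hρ
    simp only []
    rw [List.tail_drop, List.take_append_drop]
  · rintro ⟨π, σ⟩ hp
    rw [Finset.mem_product, Set.Finite.mem_toFinset, Set.Finite.mem_toFinset] at hp
    have hσd : σ = (i, j) :: σ.tail := cons_decomp hp.2
    show (List.map w π).prod * (List.map w σ).prod = w (i, j) * (List.map w (π ++ σ.tail)).prod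
    conv_lhs => rw [hσd]
    simp only [List.map_append, List.map_cons, List.prod_append, List.prod_cons]
    ring
end

section
/- Dynamic programming correctness for the forward alignment matrix: let k : ℕ × ℕ → ℝ and define C : ℤ × ℤ → ℝ by the conventions C(−1,−1) = 1, C(p,−1) = 0 and C(−1,q) = 0 for p, q ≥ 0, and the recursion C(p,q) = k(p,q) · ( C(p−1, q) + C(p−1, q−1) + C(p, q−1) ) for p, q ≥ 0. Then for all natural numbers p, q, C(p,q) = ∑_π ∏_{l=0}^{L_π} k(π(l)), the sum ranging over all alignment paths π from (0,0) to (p,q). -/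
namespace AlignAux

lemma concat_eq_concat {α : Type*} {l₁ l₂ : List α} {a b : α} :
    l₁ ++ [a] = l₂ ++ [b] ↔ l₁ = l₂ ∧ a = b := by
  constructor
  · intro h
    have h' := congrArg List.reverse h
    simp at h'
    exact ⟨h'.2, h'.1⟩
  · rintro ⟨rfl, rfl⟩; rfl

/-- All alignment paths from `(0,0)` to `(p,q)`, as a `Finset`. -/
def Pset : ℕ → ℕ → Finset (List (ℕ × ℕ))
  | 0, 0 => {[(0,0)]}
  | p+1, 0 => (Pset p 0).image (fun τ => τ ++ [(p+1, 0)])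
  | 0, q+1 => (Pset 0 q).image (fun τ => τ ++ [(0, q+1)])
  | p+1, q+1 =>
      ((Pset p (q+1)).image (fun τ => τ ++ [(p+1, q+1)])) ∪
      ((Pset p q).image (fun τ => τ ++ [(p+1, q+1)])) ∪
      ((Pset (p+1) q).image (fun τ => τ ++ [(p+1, q+1)]))

lemma nil_not_mem_Pset : ∀ p q : ℕ, ([] : List (ℕ × ℕ)) ∉ Pset p q := by
  intro p q
  match p, q with
  | 0, 0 => simp [Pset]
  | p+1, 0 => simp [Pset]
  | 0, q+1 => simp [Pset]
  | p+1, q+1 => simp [Pset]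

lemma concat_align (a b c : ℕ × ℕ) (σ : List (ℕ × ℕ)) :
    IsAlignPath a b (σ ++ [c]) ↔
      c = b ∧ ((σ = [] ∧ a = b) ∨
        ∃ u, IsAlignPath a u σ ∧
          (c = u + (1, 0) ∨ c = u + (0, 1) ∨ c = u + (1, 1))) := by
  have hlast : (σ ++ [c]).getLast? = some c := by simp
  rcases eq_or_ne σ [] with rfl | hne
  · simp only [List.nil_append, IsAlignPath]
    simp only [List.head?_cons, List.getLast?_singleton, List.Chain', List.isChain_singleton,
      Option.some_inj, true_and, and_true]
    simp only [List.head?_nil, reduceCtorEq, false_and, exists_const, or_false]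
    constructor
    · rintro ⟨rfl, rfl⟩; exact ⟨rfl, rfl⟩
    · rintro ⟨rfl, rfl⟩; exact ⟨rfl, rfl⟩
  · obtain ⟨u, hu⟩ := Option.isSome_iff_exists.mp (List.getLast?_isSome.mpr hne)
    have hhead : (σ ++ [c]).head? = σ.head? := List.head?_append_of_ne_nil _ hne
    constructor
    · rintro ⟨ha, hb, hchain⟩
      rw [hlast] at hb
      rw [List.Chain', List.isChain_append] at hchain
      obtain ⟨hc1, -, hc3⟩ := hchain
      refine ⟨by simpa using hb, Or.inr ⟨u, ⟨by rwa [hhead] at ha, hu, hc1⟩,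
        hc3 u hu c rfl⟩⟩
    · rintro ⟨rfl, h⟩
      rcases h with ⟨h, -⟩ | ⟨v, ⟨hh, hl, hcv⟩, hstep⟩
      · exact absurd h hne
      refine ⟨by rwa [hhead], hlast, ?_⟩
      rw [List.Chain', List.isChain_append]
      refine ⟨hcv, List.isChain_singleton _, ?_⟩
      intro x hx y hy
      simp only [List.head?_cons, Option.mem_def, Option.some_inj] at hy
      subst hy
      rw [hl] at hx
      simp only [Option.mem_def, Option.some_inj] at hx
      subst hx
      exact hstep

lemma mem_Pset (π : List (ℕ × ℕ)) : ∀ p q : ℕ,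
    π ∈ Pset p q ↔ IsAlignPath (0, 0) (p, q) π := by
  induction π using List.reverseRecOn with
  | nil =>
    intro p q
    simp [nil_not_mem_Pset, IsAlignPath]
  | append_singleton σ c ih =>
    intro p q
    rw [concat_align]
    have hinj : ∀ (x : ℕ × ℕ) (s : Finset (List (ℕ × ℕ))),
        σ ++ [c] ∈ s.image (fun τ => τ ++ [x]) ↔ σ ∈ s ∧ c = x := by
      intro x s
      simp only [Finset.mem_image]
      constructor
      · rintro ⟨τ, hτ, h⟩
        obtain ⟨rfl, rfl⟩ := concat_eq_concat.mp h
        exact ⟨hτ, rfl⟩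
      · rintro ⟨hσ, rfl⟩; exact ⟨σ, hσ, rfl⟩
    match p, q with
    | 0, 0 =>
      simp only [Pset, Finset.mem_singleton]
      have : σ ++ [c] = [((0:ℕ), (0:ℕ))] ↔ σ = [] ∧ c = (0, 0) := by
        rw [show [((0:ℕ), (0:ℕ))] = [] ++ [((0:ℕ), (0:ℕ))] from rfl, concat_eq_concat]
      rw [this]
      constructor
      · rintro ⟨rfl, rfl⟩
        exact ⟨rfl, Or.inl ⟨rfl, trivial⟩⟩
      · rintro ⟨rfl, h⟩
        rcases h with ⟨rfl, -⟩ | ⟨u, -, hstep⟩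
        · exact ⟨rfl, rfl⟩
        · rcases hstep with h | h | h <;> simp [Prod.ext_iff] at h
    | p+1, 0 =>
      rw [Pset, hinj, ih]
      constructor
      · rintro ⟨hσ, rfl⟩
        exact ⟨rfl, Or.inr ⟨(p, 0), hσ, Or.inl (by simp [Prod.ext_iff])⟩⟩
      · rintro ⟨rfl, h⟩
        rcases h with ⟨-, h⟩ | ⟨u, hu, hstep⟩
        · simp [Prod.ext_iff] at h
        · rcases hstep with h | h | h
          · simp [Prod.ext_iff] at h
            have : u = (p, 0) := by ext <;> simp <;> omega
            exact ⟨this ▸ hu, rfl⟩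
          · simp [Prod.ext_iff] at h
          · simp [Prod.ext_iff] at h
    | 0, q+1 =>
      rw [Pset, hinj, ih]
      constructor
      · rintro ⟨hσ, rfl⟩
        exact ⟨rfl, Or.inr ⟨(0, q), hσ, Or.inr (Or.inl (by simp [Prod.ext_iff]))⟩⟩
      · rintro ⟨rfl, h⟩
        rcases h with ⟨-, h⟩ | ⟨u, hu, hstep⟩
        · simp [Prod.ext_iff] at h
        · rcases hstep with h | h | h
          · simp [Prod.ext_iff] at h
          · simp [Prod.ext_iff] at h
            have : u = (0, q) := by ext <;> simp <;> omega
            exact ⟨this ▸ hu, rfl⟩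
          · simp [Prod.ext_iff] at h
    | p+1, q+1 =>
      rw [Pset]
      simp only [Finset.mem_union, hinj, ih]
      constructor
      · rintro ((⟨hσ, rfl⟩ | ⟨hσ, rfl⟩) | ⟨hσ, rfl⟩)
        · exact ⟨rfl, Or.inr ⟨(p, q+1), hσ, Or.inl (by simp [Prod.ext_iff])⟩⟩
        · exact ⟨rfl, Or.inr ⟨(p, q), hσ, Or.inr (Or.inr (by simp [Prod.ext_iff]))⟩⟩
        · exact ⟨rfl, Or.inr ⟨(p+1, q), hσ, Or.inr (Or.inl (by simp [Prod.ext_iff]))⟩⟩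
      · rintro ⟨rfl, h⟩
        rcases h with ⟨-, h⟩ | ⟨u, hu, hstep⟩
        · simp [Prod.ext_iff] at h
        · rcases hstep with h | h | h
          · simp [Prod.ext_iff] at h
            have : u = (p, q+1) := by ext <;> simp <;> omega
            exact Or.inl (Or.inl ⟨this ▸ hu, rfl⟩)
          · simp [Prod.ext_iff] at h
            have : u = (p+1, q) := by ext <;> simp <;> omega
            exact Or.inr ⟨this ▸ hu, rfl⟩
          · simp [Prod.ext_iff] at h
            have : u = (p, q) := by ext <;> simp <;> omega
            exact Or.inl (Or.inr ⟨this ▸ hu, rfl⟩)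

lemma last_of_mem_Pset {π : List (ℕ × ℕ)} {p q : ℕ} (h : π ∈ Pset p q) :
    π.getLast? = some (p, q) := ((mem_Pset π p q).mp h).2.1

lemma disj_image (x : ℕ × ℕ) {a b a' b' : ℕ} (h : (a, b) ≠ (a', b')) :
    Disjoint ((Pset a b).image (fun τ => τ ++ [x]))
      ((Pset a' b').image (fun τ => τ ++ [x])) := by
  rw [Finset.disjoint_left]
  rintro π h1 h2
  simp only [Finset.mem_image] at h1 h2
  obtain ⟨τ1, ht1, rfl⟩ := h1
  obtain ⟨τ2, ht2, heq⟩ := h2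
  obtain ⟨rfl, -⟩ := concat_eq_concat.mp heq
  exact h (by
    have e1 := last_of_mem_Pset ht1
    have e2 := last_of_mem_Pset ht2
    rw [e1] at e2
    exact Option.some_inj.mp e2)

lemma sum_image_concat (k : ℕ × ℕ → ℝ) (x : ℕ × ℕ) (s : Finset (List (ℕ × ℕ))) :
    ∑ π ∈ s.image (fun τ => τ ++ [x]), (π.map k).prod =
      (∑ τ ∈ s, (τ.map k).prod) * k x := by
  rw [Finset.sum_image (by intro a _ b _ h; exact (concat_eq_concat.mp h).1),
    Finset.sum_mul]
  refine Finset.sum_congr rfl fun τ _ => ?_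
  simp

theorem sum_Pset (k : ℕ × ℕ → ℝ) (C : ℤ → ℤ → ℝ)
    (h0 : C (-1) (-1) = 1)
    (h1 : ∀ p : ℕ, C (p : ℤ) (-1) = 0)
    (h2 : ∀ q : ℕ, C (-1) (q : ℤ) = 0)
    (hrec : ∀ p q : ℕ, C (p : ℤ) (q : ℤ) =
      k (p, q) * (C ((p : ℤ) - 1) (q : ℤ) + C ((p : ℤ) - 1) ((q : ℤ) - 1) +
        C (p : ℤ) ((q : ℤ) - 1))) :
    ∀ p q : ℕ, ∑ π ∈ Pset p q, ((π.map k).prod) = C (p : ℤ) (q : ℤ)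
  | 0, 0 => by
    have h := hrec 0 0
    norm_num at h ⊢
    have e1 := h1 0
    have e2 := h2 0
    norm_num at e1 e2
    rw [h, h0, e1, e2]
    simp [Pset]
  | p+1, 0 => by
    have h := hrec (p+1) 0
    have e1 := h1 p
    have e2 := h1 (p+1)
    push_cast at h e1 e2 ⊢
    rw [show ((p:ℤ) + 1 - 1) = (p:ℤ) by ring] at h
    have ihp := sum_Pset k C h0 h1 h2 hrec p 0
    push_cast at ihp
    rw [Pset, sum_image_concat, ihp, h, e1, e2]
    ring
  | 0, q+1 => by
    have h := hrec 0 (q+1)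
    have e1 := h2 q
    have e2 := h2 (q+1)
    push_cast at h e1 e2 ⊢
    rw [show ((q:ℤ) + 1 - 1) = (q:ℤ) by ring] at h
    have ihq := sum_Pset k C h0 h1 h2 hrec 0 q
    push_cast at ihq
    rw [Pset, sum_image_concat, ihq, h, e1, e2]
    ring
  | p+1, q+1 => by
    have h := hrec (p+1) (q+1)
    push_cast at h ⊢
    rw [show ((p:ℤ) + 1 - 1) = (p:ℤ) by ring, show ((q:ℤ) + 1 - 1) = (q:ℤ) by ring] at h
    have ih1 := sum_Pset k C h0 h1 h2 hrec p (q+1)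
    have ih2 := sum_Pset k C h0 h1 h2 hrec p q
    have ih3 := sum_Pset k C h0 h1 h2 hrec (p+1) q
    push_cast at ih1 ih2 ih3
    rw [Pset, Finset.sum_union (Finset.disjoint_union_left.mpr
        ⟨disj_image _ (by simp), disj_image _ (by simp)⟩),
      Finset.sum_union (disj_image _ (by simp)),
      sum_image_concat, sum_image_concat, sum_image_concat, ih1, ih2, ih3, h]
    ring

end AlignAux

/-- Dynamic programming correctness for the forward alignment matrix: if
`C : ℤ × ℤ → ℝ` satisfies the conventions `C(−1,−1) = 1`, `C(p,−1) = 0`,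
`C(−1,q) = 0` for `p, q ≥ 0`, and the recursion
`C(p,q) = k(p,q)·(C(p−1,q) + C(p−1,q−1) + C(p,q−1))` for `p, q ≥ 0`, then for all
natural numbers `p, q`, `C(p,q)` equals the sum over all alignment paths `π` from
`(0,0)` to `(p,q)` of the product `∏_l k(π(l))`. -/
theorem forward_matrix_dp_correct (k : ℕ × ℕ → ℝ) (C : ℤ → ℤ → ℝ)
    (h0 : C (-1) (-1) = 1)
    (h1 : ∀ p : ℕ, C (p : ℤ) (-1) = 0)
    (h2 : ∀ q : ℕ, C (-1) (q : ℤ) = 0)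
    (hrec : ∀ p q : ℕ, C (p : ℤ) (q : ℤ) =
      k (p, q) * (C ((p : ℤ) - 1) (q : ℤ) + C ((p : ℤ) - 1) ((q : ℤ) - 1) +
        C (p : ℤ) ((q : ℤ) - 1))) :
    ∀ p q : ℕ, C (p : ℤ) (q : ℤ) =
      ∑ᶠ π ∈ {π : List (ℕ × ℕ) | IsAlignPath (0, 0) (p, q) π}, (π.map k).prod := by
  intro p q
  have hset : {π : List (ℕ × ℕ) | IsAlignPath (0, 0) (p, q) π} =
      ↑(AlignAux.Pset p q) := by
    ext π
    simp [AlignAux.mem_Pset]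
  rw [hset, finsum_mem_coe_finset, AlignAux.sum_Pset k C h0 h1 h2 hrec p q]
end

section
/- Derivative of the forward value with respect to a local kernel entry equals the product of forward and backward sums: fix natural numbers n and a cell (i,j) with i ≤ n and j ≤ n, let k : ℕ × ℕ → ℝ be fixed weights, and for t ∈ ℝ let k_t agree with k except that k_t(i,j) = t. Let C_t(n,n) denote the value at (n,n) of the recursion C_t(p,q) = k_t(p,q)·(C_t(p−1,q) + C_t(p−1,q−1) + C_t(p,q−1)) with conventions C_t(−1,−1) = 1, C_t(p,−1) = C_t(−1,q) = 0. Then t ↦ C_t(n,n) is differentiable on ℝ and its derivative at every t equals F′(i,j) · B′(i,j), where F′(i,j) = ∑_π ∏_{l<L_π} k(π(l)) over alignment paths π from (0,0) to (i,j) with the factor at the final cell (i,j) omitted, and B′(i,j) = ∑_σ ∏_{0<l≤L_σ} k(σ(l)) over alignment paths σ from (i,j) to (n,n) with the factor at the initial cell (i,j) omitted (equivalently, F′(i,j) = C(i−1,j−1) + C(i−1,j) + C(i,j−1) and B′(i,j) is the analogous sum of backward-matrix entries). -/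
def pathsTo (a b : ℕ × ℕ) : Finset (List (ℕ × ℕ)) :=
    if b = a then {[a]}
    else
      ((if 0 < b.1 then pathsTo a (b.1 - 1, b.2) else ∅) ∪
       (if 0 < b.2 then pathsTo a (b.1, b.2 - 1) else ∅) ∪
       (if 0 < b.1 ∧ 0 < b.2 then pathsTo a (b.1 - 1, b.2 - 1) else ∅)).image (· ++ [b])
  termination_by b.1 + b.2
  decreasing_by all_goals (simp_wf; omega)

theorem pathsTo_ne (a b : ℕ × ℕ) (h : b ≠ a) : pathsTo a b =
      ((if 0 < b.1 then pathsTo a (b.1 - 1, b.2) else ∅) ∪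
       (if 0 < b.2 then pathsTo a (b.1, b.2 - 1) else ∅) ∪
       (if 0 < b.1 ∧ 0 < b.2 then pathsTo a (b.1 - 1, b.2 - 1) else ∅)).image (· ++ [b]) := by
  rw [pathsTo]; simp [h]

theorem align_sum_le (π : List (ℕ × ℕ)) : ∀ a b, IsAlignPath a b π →
    a.1 + a.2 + π.length ≤ b.1 + b.2 + 1 := by
  induction π with
  | nil => intro a b h; simp [IsAlignPath] at h
  | cons x xs ih =>
    intro a b h
    obtain ⟨hh, hl, hc⟩ := h
    simp only [List.head?_cons, Option.some.injEq] at hh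
    subst hh
    cases xs with
    | nil =>
      simp only [List.getLast?_singleton, Option.some.injEq] at hl
      subst hl; simp
    | cons y ys =>
      simp only [List.Chain', List.isChain_cons_cons] at hc
      have hy : IsAlignPath y b (y :: ys) :=
        ⟨rfl, by rw [← hl, List.getLast?_cons_cons], hc.2⟩
      have := ih y b hy
      rcases hc.1 with h' | h' | h' <;>
        (simp [Prod.ext_iff] at h'; simp only [List.length_cons] at *; omega)

theorem isAlignPath_self (a : ℕ × ℕ) (π : List (ℕ × ℕ)) :
    IsAlignPath a a π ↔ π = [a] := by
  constructor
  · intro h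
    have hlen := align_sum_le π a a h
    have hne : π ≠ [] := by rintro rfl; simp [IsAlignPath] at h
    have : π.length = 1 := by
      have : 1 ≤ π.length := List.length_pos_iff.mpr hne
      omega
    obtain ⟨x, hx⟩ := List.length_eq_one_iff.mp this
    subst hx
    obtain ⟨hh, -, -⟩ := h
    simp only [List.head?_cons, Option.some.injEq] at hh
    rw [hh]
  · rintro rfl; exact ⟨rfl, rfl, List.isChain_singleton a⟩

theorem isAlignPath_concat {a c b : ℕ × ℕ} {π : List (ℕ × ℕ)} (h : IsAlignPath a c π)
    (hs : b = c + (1, 0) ∨ b = c + (0, 1) ∨ b = c + (1, 1)) :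
    IsAlignPath a b (π ++ [b]) := by
  obtain ⟨hh, hl, hc⟩ := h
  have hne : π ≠ [] := by rintro rfl; simp at hh
  refine ⟨?_, ?_, ?_⟩
  · rw [List.head?_append_of_ne_nil _ hne]; exact hh
  · exact List.getLast?_concat
  · refine List.isChain_append.mpr ⟨hc, List.isChain_singleton b, ?_⟩
    intro x hx y hy
    simp only [List.head?_cons, Option.mem_def, Option.some.injEq] at hy
    rw [hl] at hx
    simp only [Option.mem_def, Option.some.injEq] at hx
    subst hx; subst hy; exact hs

theorem isAlignPath_concat_iff {a b c : ℕ × ℕ} {π : List (ℕ × ℕ)} (hne : π ≠ []) :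
    IsAlignPath a b (π ++ [c]) ↔ c = b ∧
      IsAlignPath a (π.getLast hne) π ∧
      (c = π.getLast hne + (1, 0) ∨ c = π.getLast hne + (0, 1) ∨ c = π.getLast hne + (1, 1)) := by
  constructor
  · rintro ⟨hh, hl, hc⟩
    rw [List.head?_append_of_ne_nil _ hne] at hh
    rw [List.getLast?_concat] at hl
    simp only [Option.some.injEq] at hl
    simp only [List.Chain', List.isChain_append] at hc
    refine ⟨hl, ⟨hh, List.getLast?_eq_getLast hne, hc.1⟩, ?_⟩
    have := hc.2.2 (π.getLast hne) (by rw [List.getLast?_eq_getLast hne]; rfl) c rfl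
    exact this
  · rintro ⟨rfl, hpath, hs⟩
    exact isAlignPath_concat hpath hs

theorem mem_pathsTo_iff (a b : ℕ × ℕ) (π : List (ℕ × ℕ)) :
    π ∈ pathsTo a b ↔ IsAlignPath a b π := by
  by_cases hba : b = a
  · subst hba
    rw [pathsTo]
    rw [if_pos rfl]
    rw [Finset.mem_singleton]
    exact (isAlignPath_self _ π).symm
  · rw [pathsTo_ne a b hba]
    simp only [Finset.mem_image, Finset.mem_union]
    constructor
    · rintro ⟨π', hmem, rfl⟩
      have key : ∃ c, π' ∈ pathsTo a c ∧
          (b = c + (1, 0) ∨ b = c + (0, 1) ∨ b = c + (1, 1)) := by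
        rcases hmem with (h | h) | h
        · split_ifs at h with h1
          · exact ⟨_, h, Or.inl (by simp [Prod.ext_iff]; omega)⟩
          · simp at h
        · split_ifs at h with h1
          · exact ⟨_, h, Or.inr (Or.inl (by simp [Prod.ext_iff]; omega))⟩
          · simp at h
        · split_ifs at h with h1
          · exact ⟨_, h, Or.inr (Or.inr (by simp [Prod.ext_iff]; omega))⟩
          · simp at h
      obtain ⟨c, hmemc, hs⟩ := key
      have hc : IsAlignPath a c π' := by
        have hlt : c.1 + c.2 < b.1 + b.2 := by
          rcases hs with h | h | h <;> (simp [Prod.ext_iff] at h; omega)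
        exact (mem_pathsTo_iff a c π').mp hmemc
      exact isAlignPath_concat hc hs
    · intro h
      have hne : π ≠ [] := by rintro rfl; simp [IsAlignPath] at h
      obtain ⟨π', x, rfl⟩ : ∃ π' x, π = π' ++ [x] := ⟨π.dropLast, π.getLast hne, (List.dropLast_append_getLast hne).symm⟩
      have hne' : π' ≠ [] := by
        rintro rfl
        simp only [List.nil_append] at h
        obtain ⟨hh, hl, -⟩ := h
        simp only [List.head?_cons, List.getLast?_singleton, Option.some.injEq] at hh hl
        exact hba (hl ▸ hh ▸ rfl)
      rw [isAlignPath_concat_iff hne'] at h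
      obtain ⟨heq, hpath, hs⟩ := h
      have hxb : x.1 = b.1 ∧ x.2 = b.2 := by rw [heq]; exact ⟨rfl, rfl⟩
      obtain ⟨hxb1, hxb2⟩ := hxb
      have hlt : (π'.getLast hne').1 + (π'.getLast hne').2 < b.1 + b.2 := by
        rcases hs with h | h | h <;> (simp [Prod.ext_iff] at h; omega)
      have hmem' : π' ∈ pathsTo a (π'.getLast hne') :=
        (mem_pathsTo_iff a (π'.getLast hne') π').mpr hpath
      refine ⟨π', ?_, by rw [heq]⟩
      rcases hs with h | h | h
      · refine Or.inl (Or.inl ?_)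
        have h1 : 0 < b.1 := by simp [Prod.ext_iff] at h; omega
        rw [if_pos h1]
        have : (b.1 - 1, b.2) = π'.getLast hne' := by
          simp [Prod.ext_iff] at h ⊢; omega
        rw [this]; exact hmem'
      · refine Or.inl (Or.inr ?_)
        have h1 : 0 < b.2 := by simp [Prod.ext_iff] at h; omega
        rw [if_pos h1]
        have : (b.1, b.2 - 1) = π'.getLast hne' := by
          simp [Prod.ext_iff] at h ⊢; omega
        rw [this]; exact hmem'
      · refine Or.inr ?_
        have h1 : 0 < b.1 ∧ 0 < b.2 := by simp [Prod.ext_iff] at h; omega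
        rw [if_pos h1]
        have : (b.1 - 1, b.2 - 1) = π'.getLast hne' := by
          simp [Prod.ext_iff] at h ⊢; omega
        rw [this]; exact hmem'
  termination_by b.1 + b.2
  decreasing_by all_goals (simp_wf; omega)

theorem getLast?_of_mem_pathsTo {a b : ℕ × ℕ} {π : List (ℕ × ℕ)} (h : π ∈ pathsTo a b) :
    π.getLast? = some b := ((mem_pathsTo_iff a b π).mp h).2.1

theorem ne_nil_of_mem_pathsTo {a b : ℕ × ℕ} {π : List (ℕ × ℕ)} (h : π ∈ pathsTo a b) :
    π ≠ [] := by
  rintro rfl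
  have := ((mem_pathsTo_iff a b []).mp h).1
  simp at this

theorem pathsTo_disjoint {a c c' : ℕ × ℕ} (h : c ≠ c') :
    Disjoint (pathsTo a c) (pathsTo a c') := by
  rw [Finset.disjoint_left]
  intro π h1 h2
  have e1 := getLast?_of_mem_pathsTo h1
  have e2 := getLast?_of_mem_pathsTo h2
  rw [e1] at e2
  exact h (Option.some.injEq _ _ ▸ e2 : c = c')

theorem sum_pathsTo_ne {M : Type*} [AddCommMonoid M] (f : List (ℕ × ℕ) → M)
    (a b : ℕ × ℕ) (hba : b ≠ a) :
    ∑ π ∈ pathsTo a b, f π =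
      (if 0 < b.1 then ∑ π ∈ pathsTo a (b.1 - 1, b.2), f (π ++ [b]) else 0) +
      (if 0 < b.2 then ∑ π ∈ pathsTo a (b.1, b.2 - 1), f (π ++ [b]) else 0) +
      (if 0 < b.1 ∧ 0 < b.2 then ∑ π ∈ pathsTo a (b.1 - 1, b.2 - 1), f (π ++ [b]) else 0) := by
  rw [pathsTo_ne a b hba]
  rw [Finset.sum_image (by intro x _ y _ hxy; exact List.append_left_injective [b] hxy)]
  have d1 : Disjoint (if 0 < b.1 then pathsTo a (b.1 - 1, b.2) else ∅)
      (if 0 < b.2 then pathsTo a (b.1, b.2 - 1) else ∅) := by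
    split_ifs with h1 h2
    · exact pathsTo_disjoint (by simp [Prod.ext_iff]; omega)
    all_goals simp
  have d2 : Disjoint ((if 0 < b.1 then pathsTo a (b.1 - 1, b.2) else ∅) ∪
      (if 0 < b.2 then pathsTo a (b.1, b.2 - 1) else ∅))
      (if 0 < b.1 ∧ 0 < b.2 then pathsTo a (b.1 - 1, b.2 - 1) else ∅) := by
    rw [Finset.disjoint_union_left]
    constructor <;> (split_ifs with h1 h2)
    · exact pathsTo_disjoint (by simp [Prod.ext_iff]; omega)
    all_goals try simp
    exact pathsTo_disjoint (by simp [Prod.ext_iff]; omega)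
  rw [Finset.sum_union d2, Finset.sum_union d1]
  congr 1
  · congr 1 <;> (split_ifs <;> simp)
  · split_ifs <;> simp

theorem pathsTo_self (a : ℕ × ℕ) : pathsTo a a = {[a]} := by rw [pathsTo]; simp

noncomputable def fullSum (k : ℕ × ℕ → ℝ) (a b : ℕ × ℕ) : ℝ :=
  ∑ π ∈ pathsTo a b, (π.map k).prod

noncomputable def tailSum (k : ℕ × ℕ → ℝ) (a b : ℕ × ℕ) : ℝ :=
  ∑ π ∈ pathsTo a b, (π.tail.map k).prod

noncomputable def dropSum (k : ℕ × ℕ → ℝ) (a b : ℕ × ℕ) : ℝ :=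
  ∑ π ∈ pathsTo a b, (π.dropLast.map k).prod

theorem fullSum_self (k : ℕ × ℕ → ℝ) (a : ℕ × ℕ) : fullSum k a a = k a := by
  rw [fullSum, pathsTo_self]; simp

theorem tailSum_self (k : ℕ × ℕ → ℝ) (a : ℕ × ℕ) : tailSum k a a = 1 := by
  rw [tailSum, pathsTo_self]; simp

theorem dropSum_self (k : ℕ × ℕ → ℝ) (a : ℕ × ℕ) : dropSum k a a = 1 := by
  rw [dropSum, pathsTo_self]; simp

theorem fullSum_ne (k : ℕ × ℕ → ℝ) (a b : ℕ × ℕ) (hba : b ≠ a) :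
    fullSum k a b = k b *
      ((if 0 < b.1 then fullSum k a (b.1 - 1, b.2) else 0) +
       (if 0 < b.2 then fullSum k a (b.1, b.2 - 1) else 0) +
       (if 0 < b.1 ∧ 0 < b.2 then fullSum k a (b.1 - 1, b.2 - 1) else 0)) := by
  rw [fullSum, sum_pathsTo_ne _ a b hba]
  have key : ∀ c : ℕ × ℕ, ∑ π ∈ pathsTo a c, ((π ++ [b]).map k).prod = fullSum k a c * k b := by
    intro c
    rw [fullSum, Finset.sum_mul]
    exact Finset.sum_congr rfl fun π _ => by simp
  split_ifs <;> try simp only [key]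
  all_goals ring

theorem dropSum_ne (k : ℕ × ℕ → ℝ) (a b : ℕ × ℕ) (hba : b ≠ a) :
    dropSum k a b =
      (if 0 < b.1 then fullSum k a (b.1 - 1, b.2) else 0) +
      (if 0 < b.2 then fullSum k a (b.1, b.2 - 1) else 0) +
      (if 0 < b.1 ∧ 0 < b.2 then fullSum k a (b.1 - 1, b.2 - 1) else 0) := by
  rw [dropSum, sum_pathsTo_ne _ a b hba]
  have key : ∀ c : ℕ × ℕ, ∑ π ∈ pathsTo a c, ((π ++ [b]).dropLast.map k).prod = fullSum k a c := by
    intro c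
    rw [fullSum]
    exact Finset.sum_congr rfl fun π _ => by rw [List.dropLast_concat]
  split_ifs <;> try simp only [key]
  all_goals ring

theorem tailSum_ne (k : ℕ × ℕ → ℝ) (a b : ℕ × ℕ) (hba : b ≠ a) :
    tailSum k a b = k b *
      ((if 0 < b.1 then tailSum k a (b.1 - 1, b.2) else 0) +
       (if 0 < b.2 then tailSum k a (b.1, b.2 - 1) else 0) +
       (if 0 < b.1 ∧ 0 < b.2 then tailSum k a (b.1 - 1, b.2 - 1) else 0)) := by
  rw [tailSum, sum_pathsTo_ne _ a b hba]
  have key : ∀ c : ℕ × ℕ, ∑ π ∈ pathsTo a c, ((π ++ [b]).tail.map k).prod = tailSum k a c * k b := by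
    intro c
    rw [tailSum, Finset.sum_mul]
    refine Finset.sum_congr rfl fun π hπ => ?_
    rw [List.tail_append_of_ne_nil (ne_nil_of_mem_pathsTo hπ)]
    simp
  split_ifs <;> try simp only [key]
  all_goals ring


/-- Derivative of the forward value with respect to a local kernel entry: fix a cell
`(i,j)` with `i ≤ n`, `j ≤ n` and weights `k`. For `t : ℝ` let `k_t = k` except
`k_t(i,j) = t`, and let `C t` satisfy the forward recursion
`C_t(p,q) = k_t(p,q)·(C_t(p−1,q) + C_t(p−1,q−1) + C_t(p,q−1))` with the conventions
`C_t(−1,−1) = 1`, `C_t(p,−1) = C_t(−1,q) = 0`. Then `t ↦ C_t(n,n)` is differentiable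
everywhere with derivative `F′(i,j) · B′(i,j)`, where
`F′(i,j) = ∑_π ∏_{l<L_π} k(π(l))` over alignment paths `π` from `(0,0)` to `(i,j)`
with the factor at the final cell `(i,j)` omitted, and
`B′(i,j) = ∑_σ ∏_{0<l≤L_σ} k(σ(l))` over alignment paths `σ` from `(i,j)` to `(n,n)`
with the factor at the initial cell `(i,j)` omitted. -/
theorem forward_value_hasDerivAt_kernel_entry (n i j : ℕ) (hi : i ≤ n) (hj : j ≤ n)
    (k : ℕ × ℕ → ℝ) (C : ℝ → ℤ → ℤ → ℝ)
    (h0 : ∀ t : ℝ, C t (-1) (-1) = 1)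
    (h1 : ∀ (t : ℝ) (p : ℕ), C t (p : ℤ) (-1) = 0)
    (h2 : ∀ (t : ℝ) (q : ℕ), C t (-1) (q : ℤ) = 0)
    (hrec : ∀ (t : ℝ) (p q : ℕ), C t (p : ℤ) (q : ℤ) =
      Function.update k (i, j) t (p, q) *
        (C t ((p : ℤ) - 1) (q : ℤ) + C t ((p : ℤ) - 1) ((q : ℤ) - 1) +
          C t (p : ℤ) ((q : ℤ) - 1))) :
    ∀ t : ℝ, HasDerivAt (fun s : ℝ => C s (n : ℤ) (n : ℤ))
      ((∑ᶠ π ∈ {π : List (ℕ × ℕ) | IsAlignPath (0, 0) (i, j) π},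
          (π.dropLast.map k).prod) *
        ∑ᶠ σ ∈ {σ : List (ℕ × ℕ) | IsAlignPath (i, j) (n, n) σ},
          (σ.tail.map k).prod) t := by
  intro t
  have hset1 : {π : List (ℕ × ℕ) | IsAlignPath (0, 0) (i, j) π}
      = ↑(pathsTo (0, 0) (i, j)) := by
    ext π; simp [mem_pathsTo_iff]
  have hset2 : {σ : List (ℕ × ℕ) | IsAlignPath (i, j) (n, n) σ}
      = ↑(pathsTo (i, j) (n, n)) := by
    ext σ; simp [mem_pathsTo_iff]
  rw [hset1, hset2, finsum_mem_coe_finset, finsum_mem_coe_finset]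
  -- the region where C is independent of t
  have region : ∀ m : ℕ, ∀ p q : ℕ, p + q = m → (p < i ∨ q < j) →
      ∀ s : ℝ, C s (p : ℤ) (q : ℤ) = fullSum k (0, 0) (p, q) := by
    intro m
    induction m using Nat.strong_induction_on with
    | _ m ih =>
      intro p q hpq hreg s
      have hne : ((p, q) : ℕ × ℕ) ≠ (i, j) := by
        intro h; simp [Prod.ext_iff] at h; omega
      by_cases h00 : ((p, q) : ℕ × ℕ) = (0, 0)
      · obtain ⟨rfl, rfl⟩ : p = 0 ∧ q = 0 := by simpa [Prod.ext_iff] using h00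
        rw [hrec s 0 0, Function.update_of_ne hne, fullSum_self]
        have e2 := h2 s 0
        have e1 := h1 s 0
        have e0 := h0 s
        norm_num at e2 e1 ⊢
        rw [e2, e1, e0]
        ring
      · rw [hrec s p q, Function.update_of_ne hne, fullSum_ne k (0, 0) (p, q) h00]
        have t1 : C s ((p : ℤ) - 1) (q : ℤ)
            = (if 0 < p then fullSum k (0, 0) (p - 1, q) else 0) := by
          rcases Nat.eq_zero_or_pos p with rfl | hp
          · rw [if_neg (by omega)]
            have e : ((0 : ℕ) : ℤ) - 1 = -1 := by norm_num
            rw [e]; exact h2 s q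
          · rw [if_pos hp]
            have e : (p : ℤ) - 1 = ((p - 1 : ℕ) : ℤ) := by omega
            rw [e]
            exact ih _ (by omega) (p - 1) q rfl (by omega) s
        have t3 : C s (p : ℤ) ((q : ℤ) - 1)
            = (if 0 < q then fullSum k (0, 0) (p, q - 1) else 0) := by
          rcases Nat.eq_zero_or_pos q with rfl | hq
          · rw [if_neg (by omega)]
            have e : ((0 : ℕ) : ℤ) - 1 = -1 := by norm_num
            rw [e]; exact h1 s p
          · rw [if_pos hq]
            have e : (q : ℤ) - 1 = ((q - 1 : ℕ) : ℤ) := by omega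
            rw [e]
            exact ih _ (by omega) p (q - 1) rfl (by omega) s
        have t2 : C s ((p : ℤ) - 1) ((q : ℤ) - 1)
            = (if 0 < p ∧ 0 < q then fullSum k (0, 0) (p - 1, q - 1) else 0) := by
          rcases Nat.eq_zero_or_pos p with rfl | hp
          · rw [if_neg (by omega)]
            have e : ((0 : ℕ) : ℤ) - 1 = -1 := by norm_num
            rw [e]
            rcases Nat.eq_zero_or_pos q with rfl | hq
            · rw [e]; exact absurd h00 (by simp)
            · have e' : (q : ℤ) - 1 = ((q - 1 : ℕ) : ℤ) := by omega
              rw [e']; exact h2 s (q - 1)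
          · rcases Nat.eq_zero_or_pos q with rfl | hq
            · rw [if_neg (by omega)]
              have e : ((0 : ℕ) : ℤ) - 1 = -1 := by norm_num
              have e' : (p : ℤ) - 1 = ((p - 1 : ℕ) : ℤ) := by omega
              rw [e, e']; exact h1 s (p - 1)
            · rw [if_pos ⟨hp, hq⟩]
              have e : (p : ℤ) - 1 = ((p - 1 : ℕ) : ℤ) := by omega
              have e' : (q : ℤ) - 1 = ((q - 1 : ℕ) : ℤ) := by omega
              rw [e, e']
              exact ih _ (by omega) (p - 1) (q - 1) rfl (by omega) s
        rw [t1, t2, t3]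
        simp only []
        ring
  -- derivative induction
  have hderiv : ∀ m : ℕ, ∀ p q : ℕ, p + q = m → ∀ s : ℝ,
      HasDerivAt (fun u : ℝ => C u (p : ℤ) (q : ℤ))
        (dropSum k (0, 0) (i, j) * tailSum k (i, j) (p, q)) s := by
    intro m
    induction m using Nat.strong_induction_on with
    | _ m ih =>
      intro p q hpq s
      by_cases hij : ((p, q) : ℕ × ℕ) = (i, j)
      · obtain ⟨rfl, rfl⟩ : p = i ∧ q = j := by simpa [Prod.ext_iff] using hij
        have hFv : ∀ u : ℝ, C u (p : ℤ) (q : ℤ) = u * dropSum k (0, 0) (p, q) := by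
          intro u
          rw [hrec u p q, Function.update_self]
          congr 1
          by_cases h00 : ((p, q) : ℕ × ℕ) = (0, 0)
          · obtain ⟨rfl, rfl⟩ : p = 0 ∧ q = 0 := by simpa [Prod.ext_iff] using h00
            rw [dropSum_self]
            have e2 := h2 u 0
            have e1 := h1 u 0
            have e0 := h0 u
            norm_num at e2 e1 ⊢
            rw [e2, e1, e0]
            ring
          · rw [dropSum_ne k (0, 0) (p, q) h00]
            have t1 : C u ((p : ℤ) - 1) (q : ℤ)
                = (if 0 < p then fullSum k (0, 0) (p - 1, q) else 0) := by
              rcases Nat.eq_zero_or_pos p with rfl | hp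
              · rw [if_neg (by omega)]
                have e : ((0 : ℕ) : ℤ) - 1 = -1 := by norm_num
                rw [e]; exact h2 u q
              · rw [if_pos hp]
                have e : (p : ℤ) - 1 = ((p - 1 : ℕ) : ℤ) := by omega
                rw [e]
                exact region _ (p - 1) q rfl (by omega) u
            have t3 : C u (p : ℤ) ((q : ℤ) - 1)
                = (if 0 < q then fullSum k (0, 0) (p, q - 1) else 0) := by
              rcases Nat.eq_zero_or_pos q with rfl | hq
              · rw [if_neg (by omega)]
                have e : ((0 : ℕ) : ℤ) - 1 = -1 := by norm_num
                rw [e]; exact h1 u p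
              · rw [if_pos hq]
                have e : (q : ℤ) - 1 = ((q - 1 : ℕ) : ℤ) := by omega
                rw [e]
                exact region _ p (q - 1) rfl (by omega) u
            have t2 : C u ((p : ℤ) - 1) ((q : ℤ) - 1)
                = (if 0 < p ∧ 0 < q then fullSum k (0, 0) (p - 1, q - 1) else 0) := by
              rcases Nat.eq_zero_or_pos p with rfl | hp
              · rw [if_neg (by omega)]
                have e : ((0 : ℕ) : ℤ) - 1 = -1 := by norm_num
                rw [e]
                rcases Nat.eq_zero_or_pos q with rfl | hq
                · exact absurd h00 (by simp)
                · have e' : (q : ℤ) - 1 = ((q - 1 : ℕ) : ℤ) := by omega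
                  rw [e']; exact h2 u (q - 1)
              · rcases Nat.eq_zero_or_pos q with rfl | hq
                · rw [if_neg (by omega)]
                  have e : ((0 : ℕ) : ℤ) - 1 = -1 := by norm_num
                  have e' : (p : ℤ) - 1 = ((p - 1 : ℕ) : ℤ) := by omega
                  rw [e, e']; exact h1 u (p - 1)
                · rw [if_pos ⟨hp, hq⟩]
                  have e : (p : ℤ) - 1 = ((p - 1 : ℕ) : ℤ) := by omega
                  have e' : (q : ℤ) - 1 = ((q - 1 : ℕ) : ℤ) := by omega
                  rw [e, e']
                  exact region _ (p - 1) (q - 1) rfl (by omega) u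
            rw [t1, t2, t3]
            simp only []
            ring
        have heq : (fun u : ℝ => C u (p : ℤ) (q : ℤ))
            = fun u : ℝ => u * dropSum k (0, 0) (p, q) := funext hFv
        rw [heq, tailSum_self, mul_one]
        exact hasDerivAt_mul_const _
      · -- (p,q) ≠ (i,j)
        have d1 : HasDerivAt (fun u : ℝ => C u ((p : ℤ) - 1) (q : ℤ))
            (dropSum k (0, 0) (i, j) * (if 0 < p then tailSum k (i, j) (p - 1, q) else 0)) s := by
          rcases Nat.eq_zero_or_pos p with rfl | hp
          · rw [if_neg (by omega), mul_zero]
            have e : (fun u : ℝ => C u (((0 : ℕ) : ℤ) - 1) (q : ℤ)) = fun _ => (0 : ℝ) := by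
              funext u
              have e' : ((0 : ℕ) : ℤ) - 1 = -1 := by norm_num
              rw [e']; exact h2 u q
            rw [e]; exact hasDerivAt_const s 0
          · rw [if_pos hp]
            have e : (p : ℤ) - 1 = ((p - 1 : ℕ) : ℤ) := by omega
            rw [e]
            exact ih _ (by omega) (p - 1) q rfl s
        have d3 : HasDerivAt (fun u : ℝ => C u (p : ℤ) ((q : ℤ) - 1))
            (dropSum k (0, 0) (i, j) * (if 0 < q then tailSum k (i, j) (p, q - 1) else 0)) s := by
          rcases Nat.eq_zero_or_pos q with rfl | hq
          · rw [if_neg (by omega), mul_zero]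
            have e : (fun u : ℝ => C u (p : ℤ) (((0 : ℕ) : ℤ) - 1)) = fun _ => (0 : ℝ) := by
              funext u
              have e' : ((0 : ℕ) : ℤ) - 1 = -1 := by norm_num
              rw [e']; exact h1 u p
            rw [e]; exact hasDerivAt_const s 0
          · rw [if_pos hq]
            have e : (q : ℤ) - 1 = ((q - 1 : ℕ) : ℤ) := by omega
            rw [e]
            exact ih _ (by omega) p (q - 1) rfl s
        have d2 : HasDerivAt (fun u : ℝ => C u ((p : ℤ) - 1) ((q : ℤ) - 1))
            (dropSum k (0, 0) (i, j) *
              (if 0 < p ∧ 0 < q then tailSum k (i, j) (p - 1, q - 1) else 0)) s := by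
          rcases Nat.eq_zero_or_pos p with rfl | hp
          · rw [if_neg (by omega), mul_zero]
            rcases Nat.eq_zero_or_pos q with rfl | hq
            · have e : (fun u : ℝ => C u (((0 : ℕ) : ℤ) - 1) (((0 : ℕ) : ℤ) - 1))
                  = fun _ => (1 : ℝ) := by
                funext u
                have e' : ((0 : ℕ) : ℤ) - 1 = -1 := by norm_num
                rw [e']; exact h0 u
              rw [e]; exact hasDerivAt_const s 1
            · have e : (fun u : ℝ => C u (((0 : ℕ) : ℤ) - 1) ((q : ℤ) - 1))
                  = fun _ => (0 : ℝ) := by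
                funext u
                have e' : ((0 : ℕ) : ℤ) - 1 = -1 := by norm_num
                have e'' : (q : ℤ) - 1 = ((q - 1 : ℕ) : ℤ) := by omega
                rw [e', e'']; exact h2 u (q - 1)
              rw [e]; exact hasDerivAt_const s 0
          · rcases Nat.eq_zero_or_pos q with rfl | hq
            · rw [if_neg (by omega), mul_zero]
              have e : (fun u : ℝ => C u ((p : ℤ) - 1) (((0 : ℕ) : ℤ) - 1))
                  = fun _ => (0 : ℝ) := by
                funext u
                have e' : ((0 : ℕ) : ℤ) - 1 = -1 := by norm_num
                have e'' : (p : ℤ) - 1 = ((p - 1 : ℕ) : ℤ) := by omega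
                rw [e', e'']; exact h1 u (p - 1)
              rw [e]; exact hasDerivAt_const s 0
            · rw [if_pos ⟨hp, hq⟩]
              have e : (p : ℤ) - 1 = ((p - 1 : ℕ) : ℤ) := by omega
              have e' : (q : ℤ) - 1 = ((q - 1 : ℕ) : ℤ) := by omega
              rw [e, e']
              exact ih _ (by omega) (p - 1) (q - 1) rfl s
        have hC : (fun u : ℝ => C u (p : ℤ) (q : ℤ))
            = fun u : ℝ => k (p, q) *
              (C u ((p : ℤ) - 1) (q : ℤ) + C u ((p : ℤ) - 1) ((q : ℤ) - 1) +
                C u (p : ℤ) ((q : ℤ) - 1)) := by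
          funext u
          rw [hrec u p q, Function.update_of_ne hij]
        rw [hC]
        have hfinal := ((d1.add d2).add d3).const_mul (k (p, q))
        refine hfinal.congr_deriv ?_
        rw [tailSum_ne k (i, j) (p, q) hij]
        simp only []
        ring
  -- conclude
  have := hderiv (n + n) n n rfl t
  exact this
end
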